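/- If G is a group with no elements of order two, then every surjective group homomorphism p: R → G admits a set-theoretic section s: G → R with s(1) = 1 and s(x^{-1}) = s(x)^{-1} for all x ∈ G. -/
import Mathlib

def invSetoid (G : Type*) [Group G] : Setoid G where
  r x y := y = x ∨ y = x⁻¹
  iseqv := by
    refine ⟨fun x => Or.inl rfl, ?_, ?_⟩
    · rintro x y (rfl | rfl) <;> simp
    · rintro x y z (rfl | rfl) (h | h) <;> simp_all

/-- If `G` has no elements of order two, then every surjective
group homomorphism `p : R →* G` admits a set-theoretic section `s` with
`s(1) = 1` and `s(x⁻¹) = s(x)⁻¹` for all `x`. -/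
theorem stmt10 {R G : Type*} [Group R] [Group G]
    (p : R →* G) (hp : Function.Surjective p)
    (hG : ∀ x : G, x ^ 2 = 1 → x = 1) :
    ∃ s : G → R, (∀ x, p (s x) = x) ∧ s 1 = 1 ∧
      ∀ x, s x⁻¹ = (s x)⁻¹ := by
  classical
  set f := Function.surjInv hp with hf
  have hpf : ∀ x, p (f x) = x := fun x => Function.surjInv_eq hp x
  let rep : G → G := fun x => (Quotient.mk (invSetoid G) x).out
  have hrep : ∀ x : G, x = rep x ∨ x = (rep x)⁻¹ := fun x => @Quotient.mk_out G (invSetoid G) x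
  have hrepinv : ∀ x : G, rep x⁻¹ = rep x := by
    intro x
    have hq : Quotient.mk (invSetoid G) x⁻¹ = Quotient.mk (invSetoid G) x :=
      Quotient.sound (Or.inr (inv_inv x).symm)
    simp only [rep, hq]
  have hne : ∀ x : G, x ≠ 1 → x ≠ x⁻¹ := by
    intro x hx h
    exact hx (hG x (by rw [pow_two]; nth_rewrite 2 [h]; simp))
  refine ⟨fun x => if x = 1 then 1 else if x = rep x then f x else (f x⁻¹)⁻¹, ?_, ?_, ?_⟩
  · intro x
    by_cases h1 : x = 1
    · simp [h1]
    · by_cases h2 : x = rep x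
      · simp only [if_neg h1, if_pos h2, hpf]
      · simp only [if_neg h1, if_neg h2, map_inv, hpf, inv_inv]
  · simp
  · intro x
    by_cases h1 : x = 1
    · simp [h1]
    have h1' : x⁻¹ ≠ 1 := by simpa using h1
    have hxx : x ≠ x⁻¹ := hne x h1
    rcases hrep x with h2 | h2
    · -- x = rep x, so x⁻¹ ≠ rep (x⁻¹) = rep x = x
      have h3 : x⁻¹ ≠ rep x⁻¹ := by rw [hrepinv, ← h2]; exact fun h => hxx h.symm
      simp [h1, h1', ← h2, h3, inv_inv]
    · -- x = (rep x)⁻¹, so rep x = x⁻¹, and x ≠ rep x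
      have h4 : rep x = x⁻¹ := (inv_eq_iff_eq_inv.mpr h2).symm
      have h3 : x ≠ rep x := by rw [h4]; exact hxx
      have h5 : x⁻¹ = rep x⁻¹ := by rw [hrepinv, h4]
      simp [h1, h1', h3, ← h5]
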